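/- Fix T ≥ 1 and N > 0, and suppose C_t > 0 for all t. The minimum value of ∑_{t=0}^{T−1} (T − t) sqrt(C_t / n_t) over positive n_t with ∑ n_t = N equals N^{−1/2} ( ∑_{t=0}^{T−1} ((T − t)² C_t)^{1/3} )^{3/2}. -/

import Mathlib

open Real Finset

theorem stmt_14 (T : ℕ) (hT : 1 ≤ T) (N : ℝ) (hN : 0 < N)
    (C : Fin T → ℝ) (hC : ∀ t, 0 < C t) :
    IsLeast
      {x : ℝ | ∃ n : Fin T → ℝ, (∀ t, 0 < n t) ∧ (∑ t, n t = N) ∧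
        x = ∑ t : Fin T, ((T : ℝ) - t) * Real.sqrt (C t / n t)}
      (N ^ (-(1 : ℝ) / 2) *
        (∑ t : Fin T, (((T : ℝ) - t) ^ 2 * C t) ^ ((1 : ℝ) / 3)) ^ ((3 : ℝ) / 2)) := by
  haveI : NeZero T := ⟨by omega⟩
  set a : Fin T → ℝ := fun t => (((T : ℝ) - t) ^ 2 * C t) ^ ((1 : ℝ) / 3) with ha_def
  have hd : ∀ t : Fin T, 0 < (T : ℝ) - t := by
    intro t
    have := t.is_lt
    have : (t : ℝ) < T := by exact_mod_cast this
    linarith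
  have hbase : ∀ t : Fin T, 0 < ((T : ℝ) - t) ^ 2 * C t := fun t =>
    mul_pos (pow_pos (hd t) 2) (hC t)
  have ha : ∀ t, 0 < a t := fun t => Real.rpow_pos_of_pos (hbase t) _
  set S : ℝ := ∑ t : Fin T, a t with hS_def
  have hS : 0 < S := Finset.sum_pos (fun t _ => ha t) ⟨⟨0, by omega⟩, Finset.mem_univ _⟩
  have hacube : ∀ t : Fin T, a t ^ (3:ℕ) = ((T : ℝ) - t) ^ 2 * C t := by
    intro t
    rw [ha_def, ← Real.rpow_natCast (_ ^ ((1:ℝ)/3)) 3, ← Real.rpow_mul (hbase t).le]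
    norm_num
  constructor
  · -- membership
    refine ⟨fun t => N * a t / S, fun t => div_pos (mul_pos hN (ha t)) hS, ?_, ?_⟩
    · rw [← Finset.sum_div, ← Finset.mul_sum, ← hS_def, mul_div_assoc, div_self hS.ne', mul_one]
    · have hterm : ∀ t : Fin T, ((T : ℝ) - t) * Real.sqrt (C t / (N * a t / S))
          = a t * Real.sqrt (S / N) := by
        intro t
        have h3 := hacube t
        have h4 := hd t
        have h5 := ha t
        have h1 : C t / (N * a t / S) = (a t / ((T : ℝ) - t)) ^ 2 * (S / N) := by
          field_simp
          nlinarith [mul_pos hS hN, h3, h5, hC t, h4, mul_pos (mul_pos hS hN) h5]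
        rw [h1, Real.sqrt_mul (by positivity), Real.sqrt_sq (div_pos h5 h4).le, ← mul_assoc]
        congr 1
        exact mul_div_cancel₀ _ h4.ne'
      rw [Finset.sum_congr rfl (fun t _ => hterm t), ← Finset.sum_mul, ← hS_def]
      have e2 : S ^ ((3:ℝ)/2) = S * S ^ ((1:ℝ)/2) := by
        nth_rewrite 2 [← Real.rpow_one S]
        rw [← Real.rpow_add hS]
        norm_num
      have e3 : N ^ (-(1:ℝ)/2) = (N ^ ((1:ℝ)/2))⁻¹ := by
        rw [show (-(1:ℝ)/2) = -(1/2) by ring, Real.rpow_neg hN.le]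
      rw [Real.sqrt_eq_rpow, Real.div_rpow hS.le hN.le, e2, e3]
      ring
  · -- lower bound
    rintro x ⟨n, hn, hsum, rfl⟩
    set b : Fin T → ℝ := fun t => ((T : ℝ) - t) * Real.sqrt (C t / n t) with hb_def
    have hb : ∀ t, 0 < b t := fun t =>
      mul_pos (hd t) (Real.sqrt_pos.mpr (div_pos (hC t) (hn t)))
    set B : ℝ := ∑ t : Fin T, b t with hB_def
    have hB : 0 ≤ B := Finset.sum_nonneg fun t _ => (hb t).le
    have key : ∀ t, a t = b t ^ ((2:ℝ)/3) * n t ^ ((1:ℝ)/3) := by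
      intro t
      have hb2 : b t ^ (2:ℕ) = ((T : ℝ) - t) ^ 2 * C t / n t := by
        rw [hb_def]
        simp only
        rw [mul_pow, Real.sq_sqrt (le_of_lt (div_pos (hC t) (hn t)))]
        ring
      have : b t ^ ((2:ℝ)/3) = (((T : ℝ) - t) ^ 2 * C t / n t) ^ ((1:ℝ)/3) := by
        rw [← hb2, ← Real.rpow_natCast (b t) 2, ← Real.rpow_mul (hb t).le]
        norm_num
      rw [this, ← Real.mul_rpow (div_pos (hbase t) (hn t)).le (hn t).le,
        div_mul_cancel₀ _ (hn t).ne']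
    have hpq : Real.HolderConjugate (3/2) 3 := Real.holderConjugate_iff.mpr ⟨by norm_num, by norm_num⟩
    have H := Real.inner_le_Lp_mul_Lq_of_nonneg (s := Finset.univ)
      (f := fun t => b t ^ ((2:ℝ)/3)) (g := fun t => n t ^ ((1:ℝ)/3)) hpq
      (fun i _ => Real.rpow_nonneg (hb i).le _) (fun i _ => Real.rpow_nonneg (hn i).le _)
    have hf3 : ∀ t : Fin T, (b t ^ ((2:ℝ)/3)) ^ ((3:ℝ)/2) = b t := by
      intro t
      rw [← Real.rpow_mul (hb t).le]
      norm_num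
    have hg3 : ∀ t : Fin T, (n t ^ ((1:ℝ)/3)) ^ ((3:ℝ)) = n t := by
      intro t
      rw [← Real.rpow_mul (hn t).le]
      norm_num
    have HS : S ≤ B ^ ((2:ℝ)/3) * N ^ ((1:ℝ)/3) := by
      have e1 : S = ∑ t : Fin T, b t ^ ((2:ℝ)/3) * n t ^ ((1:ℝ)/3) :=
        Finset.sum_congr rfl fun t _ => key t
      rw [e1]
      calc ∑ t : Fin T, b t ^ ((2:ℝ)/3) * n t ^ ((1:ℝ)/3)
          ≤ (∑ t : Fin T, (b t ^ ((2:ℝ)/3)) ^ ((3:ℝ)/2)) ^ (1/((3:ℝ)/2)) *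
            (∑ t : Fin T, (n t ^ ((1:ℝ)/3)) ^ ((3:ℝ))) ^ (1/(3:ℝ)) := H
        _ = B ^ ((2:ℝ)/3) * N ^ ((1:ℝ)/3) := by
            rw [Finset.sum_congr rfl (fun t _ => hf3 t),
              Finset.sum_congr rfl (fun t _ => hg3 t), ← hB_def, hsum]
            norm_num
    have HS2 : S ^ ((3:ℝ)/2) ≤ B * N ^ ((1:ℝ)/2) := by
      calc S ^ ((3:ℝ)/2) ≤ (B ^ ((2:ℝ)/3) * N ^ ((1:ℝ)/3)) ^ ((3:ℝ)/2) :=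
            Real.rpow_le_rpow hS.le HS (by norm_num)
        _ = B * N ^ ((1:ℝ)/2) := by
            rw [Real.mul_rpow (by positivity) (by positivity),
              ← Real.rpow_mul hB, ← Real.rpow_mul hN.le]
            norm_num
    have hNpow : (0:ℝ) < N ^ ((1:ℝ)/2) := Real.rpow_pos_of_pos hN _
    have : N ^ (-(1:ℝ)/2) * S ^ ((3:ℝ)/2) ≤ N ^ (-(1:ℝ)/2) * (B * N ^ ((1:ℝ)/2)) :=
      mul_le_mul_of_nonneg_left HS2 (Real.rpow_nonneg hN.le _)
    calc N ^ (-(1:ℝ)/2) * S ^ ((3:ℝ)/2) ≤ N ^ (-(1:ℝ)/2) * (B * N ^ ((1:ℝ)/2)) := this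
      _ = B := by
          rw [mul_comm B, ← mul_assoc, ← Real.rpow_add hN]
          norm_num
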